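/- Fix c ∈ (0, π) and β ∈ ℝ. Let I ⊆ (0, π) be an open interval and b : I → (0, ∞), α, γ : I → ℝ functions such that for every a ∈ I: cosh(b(a)) = cos c · cos a + sin c · sin a · cosh β, cos a = cosh(b(a)) · cos c − sinh(b(a)) · sin c · sinh(α(a)), and cos c = cos a · cosh(b(a)) − sin a · sinh(b(a)) · sinh(γ(a)). Then α is differentiable on I with α′(a) = cosh(γ(a)) / sinh(b(a)) for every a ∈ I. -/

import Mathlib

open Real Set

/-- de Sitter trigonometry for a triangle with two time-like edges `ia, ic` and a
space-like edge `b`: with `c, β` fixed and `b`, `α`, `γ` determined by the cosine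
laws as functions of `a`, one has `∂α/∂a = cosh γ / sinh b`. -/
theorem stmt_11 (c β : ℝ) (hc : c ∈ Ioo 0 π)
    (lo hi : ℝ) (hI : Ioo lo hi ⊆ Ioo 0 π)
    (b α γ : ℝ → ℝ)
    (hb : ∀ a ∈ Ioo lo hi, 0 < b a)
    (law1 : ∀ a ∈ Ioo lo hi, cosh (b a) = cos c * cos a + sin c * sin a * cosh β)
    (law2 : ∀ a ∈ Ioo lo hi, cos a = cosh (b a) * cos c - sinh (b a) * sin c * sinh (α a))
    (law3 : ∀ a ∈ Ioo lo hi, cos c = cos a * cosh (b a) - sin a * sinh (b a) * sinh (γ a)) :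
    ∀ a ∈ Ioo lo hi, HasDerivAt α (cosh (γ a) / sinh (b a)) a := by
  have hsc : 0 < sin c := sin_pos_of_pos_of_lt_pi hc.1 hc.2
  obtain ⟨F, hFdef⟩ : ∃ F : ℝ → ℝ, F = fun x => cos c * cos x + sin c * sin x * cosh β :=
    ⟨_, rfl⟩
  have hFx : ∀ x, F x = cos c * cos x + sin c * sin x * cosh β := fun x => by rw [hFdef]
  have hKgt : ∀ x ∈ Ioo lo hi, 1 < F x := fun x hx => by
    rw [hFx, ← law1 x hx]; exact Real.one_lt_cosh.2 (ne_of_gt (hb x hx))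
  have hSb : ∀ x ∈ Ioo lo hi, sinh (b x) = Real.sqrt (F x ^ 2 - 1) := fun x hx => by
    have h1 : sinh (b x) ^ 2 = F x ^ 2 - 1 := by
      rw [hFx, ← law1 x hx]; have := Real.cosh_sq (b x); linarith
    have h2 : 0 < sinh (b x) := Real.sinh_pos_iff.2 (hb x hx)
    rw [← h1, Real.sqrt_sq h2.le]
  obtain ⟨G, hGdef⟩ :
      ∃ G : ℝ → ℝ, G = fun x => (F x * cos c - cos x) / (Real.sqrt (F x ^ 2 - 1) * sin c) :=
    ⟨_, rfl⟩
  have hsinα : ∀ x ∈ Ioo lo hi, sinh (α x) = G x := fun x hx => by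
    have hS : 0 < sinh (b x) := Real.sinh_pos_iff.2 (hb x hx)
    have l2 := law2 x hx
    rw [hGdef]
    simp only
    rw [← hSb x hx, hFx, ← law1 x hx]
    field_simp
    linarith [l2]
  have hαG : ∀ x ∈ Ioo lo hi, α x = arsinh (G x) := fun x hx => by
    rw [← hsinα x hx, Real.arsinh_sinh]
  intro a ha
  have haI := hI ha
  have hsa : 0 < sin a := sin_pos_of_pos_of_lt_pi haI.1 haI.2
  have hev : α =ᶠ[nhds a] fun x => arsinh (G x) := by
    filter_upwards [Ioo_mem_nhds ha.1 ha.2] with x hx using hαG x hx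
  have hKa : 1 < F a := hKgt a ha
  have hne : F a ^ 2 - 1 ≠ 0 := by nlinarith
  have hS0 : 0 < Real.sqrt (F a ^ 2 - 1) := Real.sqrt_pos.2 (by nlinarith)
  have hS2 : Real.sqrt (F a ^ 2 - 1) ^ 2 = F a ^ 2 - 1 := Real.sq_sqrt (by nlinarith)
  have hden_ne : Real.sqrt (F a ^ 2 - 1) * sin c ≠ 0 := by positivity
  have hFd : HasDerivAt F (cos c * (-sin a) + sin c * cos a * cosh β) a := by
    rw [hFdef]
    exact ((Real.hasDerivAt_cos a).const_mul (cos c)).add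
      (((Real.hasDerivAt_sin a).const_mul (sin c)).mul_const (cosh β))
  have hGd := ((hFd.mul_const (cos c)).sub (Real.hasDerivAt_cos a)).div
      ((((hFd.pow 2).sub_const 1).sqrt hne).mul_const (sin c)) hden_ne
  have hGeq : (((fun y => F y * cos c) - cos) / fun y => Real.sqrt ((F ^ 2) y - 1) * sin c) = G := by
    rw [hGdef]; funext x; simp only [Pi.div_apply, Pi.sub_apply, Pi.pow_apply]
  rw [hGeq] at hGd
  simp only [Pi.sub_apply, Pi.pow_apply] at hGd
  have hd := (Real.hasDerivAt_arsinh (G a)).comp a hGd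
  have hαd := hd.congr_of_eventuallyEq hev
  refine hαd.congr_deriv (Eq.symm ?_)
  obtain ⟨S, hSdef⟩ : ∃ S : ℝ, S = Real.sqrt (F a ^ 2 - 1) := ⟨_, rfl⟩
  rw [← hSdef] at hS0 hS2 hden_ne ⊢
  have hGa : G a = (F a * cos c - cos a) / (S * sin c) := by simp only [hGdef]; rw [← hSdef]
  have hsA : sinh (α a) = G a := hsinα a ha
  have hcoshα : Real.sqrt (1 + G a ^ 2) = cosh (α a) := by
    rw [← hsA, show (1:ℝ) + sinh (α a) ^ 2 = cosh (α a) ^ 2 by rw [Real.cosh_sq]; ring,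
      Real.sqrt_sq (Real.cosh_pos _).le]
  have hSba : sinh (b a) = S := by rw [hSb a ha]; exact hSdef.symm
  have hKba : cosh (b a) = F a := by rw [hFx]; exact law1 a ha
  have hsinγ : sinh (γ a) = (cos a * F a - cos c) / (sin a * S) := by
    have l3 := law3 a ha
    rw [hKba, hSba] at l3
    rw [eq_div_iff (by positivity)]
    linear_combination l3
  have hcα2 : cosh (α a) ^ 2 = 1 + G a ^ 2 := by rw [Real.cosh_sq, hsA]; ring
  have h1 : (cosh (γ a) * sin a) ^ 2 = (cosh (α a) * sin c) ^ 2 := by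
    rw [mul_pow, mul_pow, Real.cosh_sq, Real.cosh_sq, hsA, hGa, hsinγ]
    field_simp
    linear_combination (sin a ^ 2 - sin c ^ 2) * hS2 + (F a ^ 2 - 1) * Real.sin_sq_add_cos_sq a -
      (F a ^ 2 - 1) * Real.sin_sq_add_cos_sq c
  have hcoshγ : cosh (γ a) * sin a = cosh (α a) * sin c :=
    (sq_eq_sq₀ (by positivity) (by positivity)).1 h1
  have hγv : cosh (γ a) = cosh (α a) * sin c / sin a := by
    field_simp
    linear_combination hcoshγ
  rw [hSba, hcoshα, hγv]
  have hcα0 : cosh (α a) ≠ 0 := (Real.cosh_pos _).ne'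
  rw [hGa] at hcα2
  have hKv := hFx a
  have hX : cosh (α a) ^ 2 * (S * sin c) ^ 2 = (S * sin c) ^ 2 + (F a * cos c - cos a) ^ 2 := by
    rw [hcα2]
    field_simp
  push_cast
  field_simp
  linear_combination hX +
    (-cos c * S ^ 2 + (F a * cos c - cos a) * F a) *
      (-cos c * Real.sin_sq_add_cos_sq a - cos a * hKv) +
    (sin c ^ 2 - (cos a * F a - cos c) * cos c - sin a ^ 2) * hS2 +
    (F a ^ 2 - 1) * Real.sin_sq_add_cos_sq c - (F a ^ 2 - 1) * Real.sin_sq_add_cos_sq a
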